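/- Let G be a nonempty compact Hausdorff space with a continuous associative multiplication μ : G × G → G. Then the linear span of the set of functions { (s, t) ↦ f(μ(s, t))·g(t) : f, g ∈ C(G, ℂ) } is dense in C(G × G, ℂ) (sup norm) and the linear span of { (s, t) ↦ f(s)·g(μ(s, t)) : f, g ∈ C(G, ℂ) } is dense in C(G × G, ℂ), if and only if μ satisfies cancellation from the right and from the left (st = s't implies s = s', and ts = ts' implies s = s'). -/

import Mathlib

open Submodule

/-- A star-closed, multiplicatively closed set of continuous functions containing `1`
and separating points has dense span. -/
lemma dense_span_of_sep {X : Type*} [TopologicalSpace X] [CompactSpace X] [T2Space X]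
    (S : Set C(X, ℂ)) (h1 : (1 : C(X, ℂ)) ∈ S)
    (hmul : ∀ f ∈ S, ∀ g ∈ S, f * g ∈ S)
    (hstar : ∀ f ∈ S, star f ∈ S)
    (hsep : ∀ x y : X, x ≠ y → ∃ f ∈ S, f x ≠ f y) :
    Dense (↑(Submodule.span ℂ S) : Set C(X, ℂ)) := by
  -- S is a submonoid
  let M : Submonoid C(X, ℂ) :=
    { carrier := S
      one_mem' := h1
      mul_mem' := fun hf hg => hmul _ hf _ hg }
  have hSstar : star S = S := by
    ext f
    constructor
    · intro hf
      have : star f ∈ S := Set.mem_star.mp hf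
      simpa using hstar _ this
    · intro hf
      exact Set.mem_star.mpr (hstar _ hf)
  have hclos : Submonoid.closure S = M := Submonoid.closure_eq (S := M)
  have hspan : Submodule.span ℂ S = Subalgebra.toSubmodule (Algebra.adjoin ℂ S) := by
    rw [Algebra.adjoin_eq_span, hclos]; rfl
  set A : StarSubalgebra ℂ C(X, ℂ) := StarAlgebra.adjoin ℂ S with hA
  have hAsub : A.toSubalgebra = Algebra.adjoin ℂ S := by
    rw [hA, StarAlgebra.adjoin_toSubalgebra, hSstar, Set.union_self]
  have hAsep : A.SeparatesPoints := by
    intro x y hxy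
    obtain ⟨f, hfS, hf⟩ := hsep x y hxy
    exact ⟨f, ⟨f, StarAlgebra.subset_adjoin ℂ S hfS, rfl⟩, hf⟩
  have hdense := ContinuousMap.starSubalgebra_topologicalClosure_eq_top_of_separatesPoints A hAsep
  have : Dense (A : Set C(X, ℂ)) := by
    have h1 : closure (A : Set C(X, ℂ)) = (A.topologicalClosure : Set C(X, ℂ)) := rfl
    rw [Dense]
    intro x
    rw [h1, hdense]
    trivial
  have hset : (↑(Submodule.span ℂ S) : Set C(X, ℂ)) = (A : Set C(X, ℂ)) := by
    rw [hspan]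
    have : (Subalgebra.toSubmodule (Algebra.adjoin ℂ S) : Set C(X, ℂ))
        = ((Algebra.adjoin ℂ S : Subalgebra ℂ C(X, ℂ)) : Set C(X, ℂ)) := rfl
    rw [this, ← hAsub]
    rfl
  rwa [hset]

/-- Functions separating two distinct points of a compact Hausdorff space. -/
lemma exists_sep_fun {X : Type*} [TopologicalSpace X] [CompactSpace X] [T2Space X]
    {x y : X} (hxy : x ≠ y) : ∃ f : C(X, ℂ), f x ≠ f y := by
  obtain ⟨f, hf0, hf1, -⟩ := exists_continuous_zero_one_of_isClosed
    (isClosed_singleton (x := x)) (isClosed_singleton (x := y))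
    (by simpa [Set.disjoint_singleton] using hxy)
  refine ⟨(ContinuousMap.mk Complex.ofReal Complex.continuous_ofReal).comp f, ?_⟩
  have h0 : f x = 0 := hf0 rfl
  have h1 : f y = 1 := hf1 rfl
  simp [h0, h1]

/-- For a nonempty compact Hausdorff space `G` with continuous associative multiplication
`μ`, the two density conditions of Woronowicz (density in `C(G × G, ℂ)` of the spans of
`{(s,t) ↦ f(μ s t) * g t}` and of `{(s,t) ↦ f s * g (μ s t)}`) hold if and only if `μ`
satisfies cancellation from the right and from the left. -/
theorem stmt_8 (G : Type*) [TopologicalSpace G] [CompactSpace G] [T2Space G] [Nonempty G]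
    (μ : G → G → G) (hcont : Continuous fun p : G × G => μ p.1 p.2)
    (hassoc : ∀ a b c : G, μ (μ a b) c = μ a (μ b c)) :
    (Dense (↑(Submodule.span ℂ
        {h : C(G × G, ℂ) | ∃ f g : C(G, ℂ), ∀ s t : G, h (s, t) = f (μ s t) * g t}) :
          Set C(G × G, ℂ)) ∧
     Dense (↑(Submodule.span ℂ
        {h : C(G × G, ℂ) | ∃ f g : C(G, ℂ), ∀ s t : G, h (s, t) = f s * g (μ s t)}) :
          Set C(G × G, ℂ)))
    ↔ ((∀ s s' t : G, μ s t = μ s' t → s = s') ∧ (∀ t s s' : G, μ t s = μ t s' → s = s')) := by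
  set S₁ : Set C(G × G, ℂ) :=
    {h : C(G × G, ℂ) | ∃ f g : C(G, ℂ), ∀ s t : G, h (s, t) = f (μ s t) * g t} with hS₁
  set S₂ : Set C(G × G, ℂ) :=
    {h : C(G × G, ℂ) | ∃ f g : C(G, ℂ), ∀ s t : G, h (s, t) = f s * g (μ s t)} with hS₂
  -- auxiliary: if every member of S agrees at two points, so does every member of closure of span
  have key : ∀ (S : Set C(G × G, ℂ)) (p q : G × G),
      (∀ h ∈ S, h p = h q) → Dense (↑(Submodule.span ℂ S) : Set C(G × G, ℂ)) →
      ∀ h : C(G × G, ℂ), h p = h q := by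
    intro S p q hagree hdense h
    let M : Submodule ℂ C(G × G, ℂ) :=
      { carrier := {h : C(G × G, ℂ) | h p = h q}
        add_mem' := by intro a b ha hb; simp only [Set.mem_setOf_eq] at *; simp [ha, hb]
        zero_mem' := by simp
        smul_mem' := by intro c a ha; simp only [Set.mem_setOf_eq] at *; simp [ha] }
    have hspanM : Submodule.span ℂ S ≤ M := Submodule.span_le.mpr hagree
    have hMclosed : IsClosed (M : Set C(G × G, ℂ)) := by
      have : (M : Set C(G × G, ℂ))
          = (fun h : C(G × G, ℂ) => h p - h q) ⁻¹' {0} := by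
        ext f; simp [M, sub_eq_zero]; exact Iff.rfl
      rw [this]
      exact IsClosed.preimage
        ((continuous_eval_const p).sub (continuous_eval_const q))
        isClosed_singleton
    have : h ∈ closure (↑(Submodule.span ℂ S) : Set C(G × G, ℂ)) := by
      rw [hdense.closure_eq]; trivial
    have := (closure_minimal hspanM hMclosed) this
    exact this
  constructor
  · rintro ⟨hd₁, hd₂⟩
    constructor
    · intro s s' t hst
      by_contra hne
      have hpq : ∀ h ∈ S₁, h (s, t) = h (s', t) := by
        rintro h ⟨f, g, hfg⟩
        rw [hfg s t, hfg s' t, hst]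
      obtain ⟨F, hF⟩ := exists_sep_fun (X := G × G)
        (x := (s, t)) (y := (s', t)) (by simp [hne])
      exact hF (key S₁ _ _ hpq hd₁ F)
    · intro t s s' hst
      by_contra hne
      have hpq : ∀ h ∈ S₂, h (t, s) = h (t, s') := by
        rintro h ⟨f, g, hfg⟩
        rw [hfg t s, hfg t s', hst]
      obtain ⟨F, hF⟩ := exists_sep_fun (X := G × G)
        (x := (t, s)) (y := (t, s')) (by simp [hne])
      exact hF (key S₂ _ _ hpq hd₂ F)
  · rintro ⟨hrc, hlc⟩
    have hsepG : ∀ x y : G, x ≠ y → ∃ f : C(G, ℂ), f x ≠ f y := fun x y h =>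
      exists_sep_fun h
    constructor
    · refine dense_span_of_sep S₁ ⟨1, 1, by simp⟩ ?_ ?_ ?_
      · rintro a ⟨f, g, hfg⟩ b ⟨f', g', hfg'⟩
        exact ⟨f * f', g * g', fun s t => by
          simp [hfg s t, hfg' s t]; ring⟩
      · rintro a ⟨f, g, hfg⟩
        exact ⟨star f, star g, fun s t => by simp [hfg s t]⟩
      · rintro ⟨s, t⟩ ⟨s', t'⟩ hne
        by_cases ht : t = t'
        · subst ht
          have hs : s ≠ s' := fun h => hne (by rw [h])
          have hμ : μ s t ≠ μ s' t := fun h => hs (hrc s s' t h)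
          obtain ⟨f, hf⟩ := hsepG _ _ hμ
          refine ⟨⟨fun p => f (μ p.1 p.2), f.continuous.comp hcont⟩, ⟨f, 1, by simp⟩, by
            simpa using hf⟩
        · obtain ⟨g, hg⟩ := hsepG _ _ ht
          refine ⟨⟨fun p => g p.2, g.continuous.comp continuous_snd⟩, ⟨1, g, by simp⟩, by
            simpa using hg⟩
    · refine dense_span_of_sep S₂ ⟨1, 1, by simp⟩ ?_ ?_ ?_
      · rintro a ⟨f, g, hfg⟩ b ⟨f', g', hfg'⟩
        exact ⟨f * f', g * g', fun s t => by
          simp [hfg s t, hfg' s t]; ring⟩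
      · rintro a ⟨f, g, hfg⟩
        exact ⟨star f, star g, fun s t => by simp [hfg s t]⟩
      · rintro ⟨s, t⟩ ⟨s', t'⟩ hne
        by_cases hs : s = s'
        · subst hs
          have ht : t ≠ t' := fun h => hne (by rw [h])
          have hμ : μ s t ≠ μ s t' := fun h => ht (hlc s t t' h)
          obtain ⟨g, hg⟩ := hsepG _ _ hμ
          refine ⟨⟨fun p => g (μ p.1 p.2), g.continuous.comp hcont⟩, ⟨1, g, by simp⟩, by
            simpa using hg⟩
        · obtain ⟨f, hf⟩ := hsepG _ _ hs
          refine ⟨⟨fun p => f p.1, f.continuous.comp continuous_fst⟩, ⟨f, 1, by simp⟩, by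
            simpa using hf⟩
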